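/- Let 0 < a ≤ x_i ≤ b and w_i > 0 with ∑ w_i = 1. Then 0 ≤ ∑ w_i x_i − ∏ x_i^{w_i} ≤ (√b − √a)². -/

import Mathlib

theorem AG_difference_bound
    (n : ℕ) (a b : ℝ) (ha : 0 < a) (hab : a ≤ b)
    (w x : Fin n → ℝ)
    (hw : ∀ i, 0 < w i) (hws : ∑ i, w i = 1)
    (hx : ∀ i, x i ∈ Set.Icc a b) :
    0 ≤ ∑ i, w i * x i - ∏ i, x i ^ w i ∧
      ∑ i, w i * x i - ∏ i, x i ^ w i ≤ (Real.sqrt b - Real.sqrt a) ^ 2 := by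
  have hn : 0 < n := by
    rcases Nat.eq_zero_or_pos n with h | h
    · subst h; simp at hws
    · exact h
  have hb0 : (0:ℝ) ≤ b := le_trans ha.le hab
  have hx0 : ∀ i, 0 < x i := fun i => lt_of_lt_of_le ha (hx i).1
  have hw0 : ∀ i ∈ Finset.univ, (0:ℝ) ≤ w i := fun i _ => (hw i).le
  have hAMGM : ∏ i, x i ^ w i ≤ ∑ i, w i * x i :=
    Real.geom_mean_le_arith_mean_weighted Finset.univ w x hw0 hws
      (fun i _ => (hx0 i).le)
  refine ⟨by linarith, ?_⟩
  set S := ∑ i, w i / x i with hSdef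
  have hS : 0 < S :=
    Finset.sum_pos (fun i _ => div_pos (hw i) (hx0 i)) ⟨⟨0, hn⟩, Finset.mem_univ _⟩
  have hGpos : 0 < ∏ i, x i ^ w i :=
    Finset.prod_pos fun i _ => Real.rpow_pos_of_pos (hx0 i) _
  -- GM ≥ HM
  have hG : (∏ i, x i ^ w i)⁻¹ ≤ S := by
    have h := Real.geom_mean_le_arith_mean_weighted Finset.univ w (fun i => (x i)⁻¹)
      hw0 hws (fun i _ => inv_nonneg.mpr (hx0 i).le)
    calc (∏ i, x i ^ w i)⁻¹ = ∏ i, (x i)⁻¹ ^ w i := by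
          rw [← Finset.prod_inv_distrib]
          exact Finset.prod_congr rfl fun i _ => (Real.inv_rpow (hx0 i).le _).symm
      _ ≤ ∑ i, w i * (x i)⁻¹ := h
      _ = S := by simp [hSdef, div_eq_mul_inv]
  have hinvS : S⁻¹ ≤ ∏ i, x i ^ w i := by
    rw [inv_le_comm₀ hS hGpos] at *
    exact hG
  -- pointwise bound summed
  have hsum : ∑ i, w i * x i + a * b * S ≤ a + b := by
    have key : ∀ i ∈ Finset.univ, w i * x i + a * b * (w i / x i) ≤ (a + b) * w i := by
      intro i _
      have h1 := (hx i).1; have h2 := (hx i).2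
      have hxi := hx0 i
      have hdiv : a * b / x i ≤ a + b - x i := by
        rw [div_le_iff₀ hxi]; nlinarith
      have := mul_le_mul_of_nonneg_left hdiv (hw i).le
      have heq : a * b * (w i / x i) = w i * (a * b / x i) := by ring
      nlinarith
    calc ∑ i, w i * x i + a * b * S
        = ∑ i, (w i * x i + a * b * (w i / x i)) := by
          rw [Finset.sum_add_distrib, ← Finset.mul_sum]
      _ ≤ ∑ i, (a + b) * w i := Finset.sum_le_sum key
      _ = a + b := by rw [← Finset.mul_sum, hws, mul_one]
  -- abS + 1/S ≥ 2√(ab)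
  have habS : 2 * Real.sqrt (a * b) ≤ a * b * S + S⁻¹ := by
    have h1 : Real.sqrt (a * b) ^ 2 = a * b := Real.sq_sqrt (by positivity)
    have key : a * b * S + S⁻¹ - 2 * Real.sqrt (a * b)
        = (Real.sqrt (a * b) * S - 1) ^ 2 / S := by
      rw [← h1]
      field_simp
      rw [Real.sqrt_sq (Real.sqrt_nonneg _)]; ring
    have h3 : 0 ≤ (Real.sqrt (a * b) * S - 1) ^ 2 / S :=
      div_nonneg (sq_nonneg _) hS.le
    linarith
  have hexp : (Real.sqrt b - Real.sqrt a) ^ 2 = a + b - 2 * Real.sqrt (a * b) := by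
    rw [sub_sq, Real.sq_sqrt hb0, Real.sq_sqrt ha.le, Real.sqrt_mul ha.le]; ring
  linarith
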